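/- For every J ∈ V, the vector G̃J lies in ker Q, and A = G̃J is the unique minimizer of the function A ↦ (1/2)⟨A, G^{-1}A⟩ − ⟨A, J⟩ over the subspace {A ∈ V : QA = 0}, where G̃ := G − G Qᵀ (Q G Qᵀ)^{-1} Q G. -/

import Mathlib

open scoped RealInnerProductSpace

/-- With `G : V → V` self-adjoint positive definite, `Q : V → W`
surjective, `B` a two-sided inverse of `QGQᵀ` and `Ginv` a two-sided inverse of `G`:
for every `J ∈ V`, the vector `G̃J` (with `G̃ = G − GQᵀ B QG`) lies in `ker Q`, and
`A = G̃J` is the unique minimizer of `A ↦ (1/2)⟨A, G⁻¹A⟩ − ⟨A, J⟩` on `{A : QA = 0}`. -/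
theorem constrained_minimizer {V W : Type*}
    [NormedAddCommGroup V] [InnerProductSpace ℝ V] [FiniteDimensional ℝ V]
    [NormedAddCommGroup W] [InnerProductSpace ℝ W] [FiniteDimensional ℝ W]
    (G : V →ₗ[ℝ] V) (hGsym : LinearMap.IsSymmetric G)
    (hGpos : ∀ v : V, v ≠ 0 → 0 < ⟪G v, v⟫)
    (Q : V →ₗ[ℝ] W) (hQ : Function.Surjective Q)
    (B : W →ₗ[ℝ] W)
    (hB₁ : (Q ∘ₗ G ∘ₗ LinearMap.adjoint Q) ∘ₗ B = LinearMap.id)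
    (hB₂ : B ∘ₗ (Q ∘ₗ G ∘ₗ LinearMap.adjoint Q) = LinearMap.id)
    (Ginv : V →ₗ[ℝ] V)
    (hGinv₁ : Ginv ∘ₗ G = LinearMap.id) (hGinv₂ : G ∘ₗ Ginv = LinearMap.id)
    (J : V) :
    Q ((G - G ∘ₗ LinearMap.adjoint Q ∘ₗ B ∘ₗ Q ∘ₗ G) J) = 0 ∧
    ∀ A : V, Q A = 0 → A ≠ (G - G ∘ₗ LinearMap.adjoint Q ∘ₗ B ∘ₗ Q ∘ₗ G) J →
      (1 / 2) * ⟪(G - G ∘ₗ LinearMap.adjoint Q ∘ₗ B ∘ₗ Q ∘ₗ G) J,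
          Ginv ((G - G ∘ₗ LinearMap.adjoint Q ∘ₗ B ∘ₗ Q ∘ₗ G) J)⟫
        - ⟪(G - G ∘ₗ LinearMap.adjoint Q ∘ₗ B ∘ₗ Q ∘ₗ G) J, J⟫
      < (1 / 2) * ⟪A, Ginv A⟫ - ⟪A, J⟫ := by
  set Gt : V →ₗ[ℝ] V := G - G ∘ₗ LinearMap.adjoint Q ∘ₗ B ∘ₗ Q ∘ₗ G with hGt
  set A₀ : V := Gt J with hA₀
  -- Ginv is symmetric
  have hGid : ∀ x : V, Ginv (G x) = x := fun x =>
    congrArg (fun f : V →ₗ[ℝ] V => f x) hGinv₁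
  have hGid' : ∀ x : V, G (Ginv x) = x := fun x =>
    congrArg (fun f : V →ₗ[ℝ] V => f x) hGinv₂
  have hGinvSym : ∀ x y : V, ⟪Ginv x, y⟫ = ⟪x, Ginv y⟫ := by
    intro x y
    calc ⟪Ginv x, y⟫ = ⟪Ginv x, G (Ginv y)⟫ := by rw [hGid']
      _ = ⟪G (Ginv x), Ginv y⟫ := (hGsym _ _).symm
      _ = ⟪x, Ginv y⟫ := by rw [hGid']
  have hGinvPos : ∀ x : V, x ≠ 0 → 0 < ⟪x, Ginv x⟫ := by
    intro x hx
    have hx' : Ginv x ≠ 0 := by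
      intro h
      apply hx
      rw [← hGid' x, h, map_zero]
    have := hGpos (Ginv x) hx'
    rwa [hGid'] at this
  -- Part 1
  have hQA₀ : Q A₀ = 0 := by
    have hB : Q (G (LinearMap.adjoint Q (B (Q (G J))))) = Q (G J) :=
      congrArg (fun f : W →ₗ[ℝ] W => f (Q (G J))) hB₁
    rw [hA₀, hGt]
    simp only [LinearMap.sub_apply, LinearMap.comp_apply, map_sub]
    rw [hB, sub_self]
  refine ⟨hQA₀, ?_⟩
  intro A hQA hne
  set D : V := A - A₀ with hD
  have hDne : D ≠ 0 := sub_ne_zero.mpr hne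
  have hQD : Q D = 0 := by rw [hD, map_sub, hQA, hQA₀, sub_zero]
  have hA : A = A₀ + D := by rw [hD]; abel
  -- Ginv A₀ - J = -(adjoint Q) (B (Q (G J)))
  have hGinvA₀ : Ginv A₀ = J - LinearMap.adjoint Q (B (Q (G J))) := by
    simp only [hA₀, hGt, LinearMap.sub_apply, LinearMap.comp_apply, map_sub]
    rw [hGid, hGid]
  have hcross : ⟪D, Ginv A₀ - J⟫ = 0 := by
    rw [hGinvA₀]
    have : J - LinearMap.adjoint Q (B (Q (G J))) - J
        = -(LinearMap.adjoint Q (B (Q (G J)))) := by abel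
    rw [this, inner_neg_right, real_inner_comm, LinearMap.adjoint_inner_left, hQD,
      inner_zero_right, neg_zero]
  have key : (1/2) * ⟪A, Ginv A⟫ - ⟪A, J⟫
      = ((1/2) * ⟪A₀, Ginv A₀⟫ - ⟪A₀, J⟫) + (1/2) * ⟪D, Ginv D⟫ + ⟪D, Ginv A₀ - J⟫ := by
    rw [hA]
    simp only [map_add, inner_add_left, inner_add_right, inner_sub_right]
    have h1 : ⟪A₀, Ginv D⟫ = ⟪D, Ginv A₀⟫ := by
      rw [← hGinvSym, real_inner_comm]
    rw [h1]; ring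
  rw [key, hcross, add_zero]
  have := hGinvPos D hDne
  linarith
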